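/- Let G be a simple graph on a finite vertex type with n vertices, let Gᶜ be its complement, and let u be a vertex. Then dp_{Gᶜ}(u) = ∑_{w ≠ u, w ∉ N_G(u)} X^{(n-1) - deg_G(w)} in ℕ[X]; equivalently, dp_G(u) + X^{deg_G(u)} + reflect_{n-1}(dp_{Gᶜ}(u)) = dp(G), where reflect_{n-1} is the ℕ-linear map on polynomials of degree ≤ n−1 sending X^i to X^{(n-1)-i} (Mathlib's Polynomial.reflect (n-1)). -/

import Mathlib

open Polynomial

/-- The neighbor finset of a vertex (with classical decidability of adjacency). -/
noncomputable def nbhd {V : Type*} [Fintype V] (G : SimpleGraph V) (v : V) : Finset V :=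
  letI := Classical.decRel G.Adj
  G.neighborFinset v

/-- The degree of a vertex (with classical decidability of adjacency). -/
noncomputable def degc {V : Type*} [Fintype V] (G : SimpleGraph V) (v : V) : ℕ :=
  (nbhd G v).card

/-- The degree polynomial of a vertex `v`: the coefficient of `X^i` is the number
of neighbors of `v` having degree `i`. -/
noncomputable def dp {V : Type*} [Fintype V] (G : SimpleGraph V) (v : V) : ℕ[X] :=
  ∑ w ∈ nbhd G v, X ^ degc G w

/-- The degree polynomial of a graph `G`: the coefficient of `X^i` is the number
of vertices of `G` of degree `i`. -/
noncomputable def dpG {V : Type*} [Fintype V] (G : SimpleGraph V) : ℕ[X] :=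
  ∑ v, X ^ degc G v

lemma degc_eq {V : Type*} [Fintype V] (G : SimpleGraph V) [DecidableRel G.Adj] (v : V) :
    degc G v = G.degree v := by
  unfold degc nbhd SimpleGraph.degree
  congr 1
  ext w
  simp [SimpleGraph.mem_neighborFinset]

lemma degc_compl {V : Type*} [Fintype V] [DecidableEq V] (G : SimpleGraph V)
    [DecidableRel G.Adj] (v : V) :
    degc Gᶜ v = Fintype.card V - 1 - degc G v := by
  rw [degc_eq, degc_eq, SimpleGraph.degree_compl]

lemma reflect_finset_sum {σ : Type*} (s : Finset σ) (f : σ → ℕ[X]) (N : ℕ) :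
    (∑ i ∈ s, f i).reflect N = ∑ i ∈ s, (f i).reflect N := by
  classical
  induction s using Finset.induction_on with
  | empty => simp
  | insert _ _ h ih => simp [Finset.sum_insert h, Polynomial.reflect_add, ih]

/-- Degree polynomial of a vertex in the complement graph:
`dp_{Gᶜ}(u) = ∑_{w ≠ u, w ∉ N(u)} X^{(n-1) - deg w}`; equivalently
`dp_G(u) + X^{deg u} + reflect_{n-1}(dp_{Gᶜ}(u)) = dp(G)`. -/
theorem dp_compl {V : Type*} [Fintype V] [DecidableEq V]
    (G : SimpleGraph V) [DecidableRel G.Adj] (u : V) :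
    dp Gᶜ u
        = ∑ w ∈ Finset.univ.filter (fun w => w ≠ u ∧ ¬ G.Adj u w),
            X ^ ((Fintype.card V - 1) - degc G w)
      ∧ dp G u + X ^ (degc G u) + (dp Gᶜ u).reflect (Fintype.card V - 1) = dpG G := by
  classical
  have hle : ∀ w : V, degc G w ≤ Fintype.card V - 1 := fun w => by
    rw [degc_eq]
    have := G.degree_lt_card_verts w
    omega
  have hnb : nbhd Gᶜ u = Finset.univ.filter (fun w => w ≠ u ∧ ¬ G.Adj u w) := by
    ext w
    simp only [nbhd, SimpleGraph.mem_neighborFinset, SimpleGraph.compl_adj,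
      Finset.mem_filter, Finset.mem_univ, true_and, ne_comm]
  have hpart1 : dp Gᶜ u
      = ∑ w ∈ Finset.univ.filter (fun w => w ≠ u ∧ ¬ G.Adj u w),
          X ^ ((Fintype.card V - 1) - degc G w) := by
    rw [dp]
    exact Finset.sum_congr hnb fun w _ => by rw [degc_compl]
  refine ⟨hpart1, ?_⟩
  have h2 : (dp Gᶜ u).reflect (Fintype.card V - 1)
      = ∑ w ∈ nbhd Gᶜ u, X ^ degc G w := by
    rw [dp, reflect_finset_sum]
    refine Finset.sum_congr rfl fun w _ => ?_
    rw [Polynomial.reflect_monomial, degc_compl,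
      Polynomial.revAt_le (by omega : Fintype.card V - 1 - degc G w ≤ Fintype.card V - 1)]
    congr 1
    have := hle w
    omega
  rw [h2, dpG]
  have hsplit := Finset.sum_filter_add_sum_filter_not Finset.univ
    (fun w => G.Adj u w) (fun w => (X : ℕ[X]) ^ degc G w)
  rw [← hsplit]
  have hdp : dp G u = ∑ w ∈ Finset.univ.filter (fun w => G.Adj u w),
      (X : ℕ[X]) ^ degc G w := by
    rw [dp]
    refine Finset.sum_congr ?_ fun _ _ => rfl
    ext w
    simp [nbhd, SimpleGraph.mem_neighborFinset]
  have hins : Finset.univ.filter (fun w => ¬ G.Adj u w) = insert u (nbhd Gᶜ u) := by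
    rw [hnb]
    ext w
    by_cases h : w = u <;> simp [h]
  rw [hdp, hins, Finset.sum_insert (by rw [hnb]; simp)]
  ring
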